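/- The value of the monic Jacobi–Piñeiro type II multiple orthogonal polynomial at x = 1 is B_{(n,m)}(1) = (γ+1)_{n+m} / ((α+γ+m+n+1)_n (β+γ+m+n+1)_m), and in particular B_{(n,m)}(1) > 0 for all n, m ∈ ℕ₀ when α, β, γ > −1. -/

import Mathlib

/-- The Pochhammer symbol `(z)_k = z(z+1)⋯(z+k−1)`. -/
noncomputable def poch (z : ℝ) (k : ℕ) : ℝ := ∏ i ∈ Finset.range k, (z + (i : ℝ))

/-- Coefficients of the Jacobi–Piñeiro type II polynomial. -/
noncomputable def JPcoef (α β γ : ℝ) (n m k j : ℕ) : ℝ :=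
  poch (γ + j + k + 1) (m - j) * poch (γ + k + m + 1) (n - k) *
    poch (α - k + n + 1) k * poch (β - j - k + m + n + 1) j /
  ((Nat.factorial j : ℝ) * (Nat.factorial k : ℝ) *
    (Nat.factorial (m - j) : ℝ) * (Nat.factorial (n - k) : ℝ))

/-- The normalization constant `N_{n,m}`. -/
noncomputable def JPnorm (α β γ : ℝ) (n m : ℕ) : ℝ :=
  (Nat.factorial n : ℝ) * (Nat.factorial m : ℝ) /
    (poch (α + γ + n + m + 1) n * poch (β + γ + n + m + 1) m)

/-- The monic Jacobi–Piñeiro type II multiple orthogonal polynomial. -/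
noncomputable def JP (α β γ : ℝ) (n m : ℕ) (x : ℝ) : ℝ :=
  JPnorm α β γ n m *
    ∑ k ∈ Finset.range (n + 1), ∑ j ∈ Finset.range (m + 1),
      JPcoef α β γ n m k j * (x - 1) ^ (j + k) * x ^ (n + m - j - k)

lemma poch_pos' {z : ℝ} {k : ℕ} (hz : ∀ i < k, 0 < z + i) : 0 < poch z k := by
  unfold poch
  exact Finset.prod_pos fun i hi => hz i (Finset.mem_range.mp hi)

lemma poch_pos {z : ℝ} (hz : 0 < z) (k : ℕ) : 0 < poch z k :=
  poch_pos' fun i _ => by positivity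

lemma poch_add (z : ℝ) (a b : ℕ) : poch z (a + b) = poch z a * poch (z + a) b := by
  unfold poch
  rw [Finset.prod_range_add]
  congr 1
  refine Finset.prod_congr rfl fun i _ => ?_
  push_cast; ring

theorem jacobi_pineiro_value_at_one (n m : ℕ) (α β γ : ℝ)
    (hα : -1 < α) (hβ : -1 < β) (hγ : -1 < γ) :
    JP α β γ n m 1
      = poch (γ + 1) (n + m) /
          (poch (α + γ + m + n + 1) n * poch (β + γ + m + n + 1) m) ∧
    0 < JP α β γ n m 1 := by
  have hsum : (∑ k ∈ Finset.range (n + 1), ∑ j ∈ Finset.range (m + 1),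
      JPcoef α β γ n m k j * ((1:ℝ) - 1) ^ (j + k) * (1:ℝ) ^ (n + m - j - k))
      = JPcoef α β γ n m 0 0 := by
    rw [Finset.sum_eq_single 0]
    · rw [Finset.sum_eq_single 0]
      · simp
      · intro j _ hj
        simp [pow_eq_zero_iff, hj]
      · simp
    · intro k _ hk
      apply Finset.sum_eq_zero
      intro j _
      have : j + k ≠ 0 := by omega
      simp [pow_eq_zero_iff, this, hk]
    · simp
  have hc : JPcoef α β γ n m 0 0 =
      poch (γ + 1) m * poch (γ + m + 1) n /
        ((Nat.factorial m : ℝ) * (Nat.factorial n : ℝ)) := by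
    simp [JPcoef, poch]
  have hval : JP α β γ n m 1 = poch (γ + 1) (n + m) /
      (poch (α + γ + m + n + 1) n * poch (β + γ + m + n + 1) m) := by
    have hsplit : poch (γ + 1) (n + m) = poch (γ + 1) m * poch (γ + m + 1) n := by
      rw [add_comm n m, poch_add]
      congr 2
      ring
    have hf1 : (0:ℝ) < (Nat.factorial n : ℝ) := by positivity
    have hf2 : (0:ℝ) < (Nat.factorial m : ℝ) := by positivity
    have hp1 : 0 < poch (α + γ + n + m + 1) n := poch_pos' fun i hi => by
      have : (0:ℝ) ≤ (n + m - 1 + i : ℕ) := Nat.cast_nonneg _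
      have hn1 : 1 ≤ n := Nat.one_le_iff_ne_zero.mpr (by omega)
      push_cast [Nat.cast_sub (by omega : 1 ≤ n + m)] at this ⊢
      linarith
    have hp2 : 0 < poch (β + γ + n + m + 1) m := poch_pos' fun i hi => by
      have : (0:ℝ) ≤ (n + m - 1 + i : ℕ) := Nat.cast_nonneg _
      have hm1 : 1 ≤ m := Nat.one_le_iff_ne_zero.mpr (by omega)
      push_cast [Nat.cast_sub (by omega : 1 ≤ n + m)] at this ⊢
      linarith
    rw [JP, hsum, hc, JPnorm, hsplit]
    have e1 : α + γ + (m:ℝ) + n + 1 = α + γ + n + m + 1 := by ring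
    have e2 : β + γ + (m:ℝ) + n + 1 = β + γ + n + m + 1 := by ring
    rw [e1, e2]
    field_simp
  refine ⟨hval, ?_⟩
  rw [hval]
  have h1 : 0 < poch (γ + 1) (n + m) := poch_pos (by linarith) _
  have h2 : 0 < poch (α + γ + m + n + 1) n := poch_pos' fun i hi => by
    have : (0:ℝ) ≤ (n + m - 1 + i : ℕ) := Nat.cast_nonneg _
    have hn1 : 1 ≤ n := Nat.one_le_iff_ne_zero.mpr (by omega)
    push_cast [Nat.cast_sub (by omega : 1 ≤ n + m)] at this ⊢
    linarith
  have h3 : 0 < poch (β + γ + m + n + 1) m := poch_pos' fun i hi => by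
    have : (0:ℝ) ≤ (n + m - 1 + i : ℕ) := Nat.cast_nonneg _
    have hm1 : 1 ≤ m := Nat.one_le_iff_ne_zero.mpr (by omega)
    push_cast [Nat.cast_sub (by omega : 1 ≤ n + m)] at this ⊢
    linarith
  positivity
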